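/- Let H be a commutative Hopf algebra and F a two-cocycle on H. Then the map R(h,g) := F(g_(1), h_(1)) F^{-1}(h_(2), g_(2)) makes the cocycle-twisted Hopf algebra H_F cotriangular; in particular R(h_(1), g_(1)) R(g_(2), h_(2)) = epsilon(g) epsilon(h) for all g, h in H_F. -/

import Mathlib

open TensorProduct LinearMap

noncomputable section

variable (H : Type) [CommRing H] [HopfAlgebra ℂ H]

/-- Iterated comultiplication on `H ⊗ H`. -/
def comul2 : (H ⊗[ℂ] H) →ₗ[ℂ] (H ⊗[ℂ] H) ⊗[ℂ] (H ⊗[ℂ] H) :=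
  (TensorProduct.tensorTensorTensorComm ℂ H H H H).toLinearMap ∘ₗ
    TensorProduct.map Coalgebra.comul Coalgebra.comul

/-- The counit of the coalgebra `H ⊗ H`. -/
def counit2 : (H ⊗[ℂ] H) →ₗ[ℂ] ℂ :=
  (LinearMap.mul' ℂ ℂ) ∘ₗ TensorProduct.map Coalgebra.counit Coalgebra.counit

/-- Convolution product on functionals on `H ⊗ H`. -/
def conv2 (f g : (H ⊗[ℂ] H) →ₗ[ℂ] ℂ) : (H ⊗[ℂ] H) →ₗ[ℂ] ℂ :=
  (LinearMap.mul' ℂ ℂ) ∘ₗ TensorProduct.map f g ∘ₗ comul2 H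

/-- Comultiplication on `H ⊗ (H ⊗ H)`. -/
def comul3 : (H ⊗[ℂ] (H ⊗[ℂ] H)) →ₗ[ℂ] (H ⊗[ℂ] (H ⊗[ℂ] H)) ⊗[ℂ] (H ⊗[ℂ] (H ⊗[ℂ] H)) :=
  (TensorProduct.tensorTensorTensorComm ℂ H H (H ⊗[ℂ] H) (H ⊗[ℂ] H)).toLinearMap ∘ₗ
    TensorProduct.map Coalgebra.comul (comul2 H)

/-- The counit of `H ⊗ (H ⊗ H)`. -/
def counit3 : (H ⊗[ℂ] (H ⊗[ℂ] H)) →ₗ[ℂ] ℂ :=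
  (LinearMap.mul' ℂ ℂ) ∘ₗ TensorProduct.map Coalgebra.counit (counit2 H)

/-- Convolution product on functionals on `H ⊗ (H ⊗ H)`. -/
def conv3 (f g : (H ⊗[ℂ] (H ⊗[ℂ] H)) →ₗ[ℂ] ℂ) : (H ⊗[ℂ] (H ⊗[ℂ] H)) →ₗ[ℂ] ℂ :=
  (LinearMap.mul' ℂ ℂ) ∘ₗ TensorProduct.map f g ∘ₗ comul3 H

variable {H}

/-- `(h ⊗ (g ⊗ f)) ↦ ε(h) F(g, f)`. -/
def cocyT1 (F : (H ⊗[ℂ] H) →ₗ[ℂ] ℂ) : (H ⊗[ℂ] (H ⊗[ℂ] H)) →ₗ[ℂ] ℂ :=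
  F ∘ₗ (TensorProduct.lid ℂ (H ⊗[ℂ] H)).toLinearMap ∘ₗ
    TensorProduct.map Coalgebra.counit LinearMap.id

/-- `(h ⊗ (g ⊗ f)) ↦ F(h, g f)`. -/
def cocyT2 (F : (H ⊗[ℂ] H) →ₗ[ℂ] ℂ) : (H ⊗[ℂ] (H ⊗[ℂ] H)) →ₗ[ℂ] ℂ :=
  F ∘ₗ TensorProduct.map LinearMap.id (LinearMap.mul' ℂ H)

/-- `(h ⊗ (g ⊗ f)) ↦ F⁻¹(h g, f)`. -/
def cocyT3 (Finv : (H ⊗[ℂ] H) →ₗ[ℂ] ℂ) : (H ⊗[ℂ] (H ⊗[ℂ] H)) →ₗ[ℂ] ℂ :=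
  Finv ∘ₗ TensorProduct.map (LinearMap.mul' ℂ H) LinearMap.id ∘ₗ
    (TensorProduct.assoc ℂ H H H).symm.toLinearMap

/-- `(h ⊗ (g ⊗ f)) ↦ F⁻¹(h, g) ε(f)`. -/
def cocyT4 (Finv : (H ⊗[ℂ] H) →ₗ[ℂ] ℂ) : (H ⊗[ℂ] (H ⊗[ℂ] H)) →ₗ[ℂ] ℂ :=
  Finv ∘ₗ (TensorProduct.rid ℂ (H ⊗[ℂ] H)).toLinearMap ∘ₗ
    TensorProduct.map LinearMap.id Coalgebra.counit ∘ₗ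
    (TensorProduct.assoc ℂ H H H).symm.toLinearMap

/-- The two-cocycle condition `∂F = 1`. -/
def IsTwoCocycle (F Finv : (H ⊗[ℂ] H) →ₗ[ℂ] ℂ) : Prop :=
  conv3 H (conv3 H (conv3 H (cocyT1 F) (cocyT2 F)) (cocyT3 Finv)) (cocyT4 Finv) = counit3 H

/-- The cocycle-twisted product `h •_F g = F(h₍₁₎, g₍₁₎) h₍₂₎ g₍₂₎ F⁻¹(h₍₃₎, g₍₃₎)` of `H_F`. -/
def twistedMul (F Finv : (H ⊗[ℂ] H) →ₗ[ℂ] ℂ) : (H ⊗[ℂ] H) →ₗ[ℂ] H :=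
  (TensorProduct.rid ℂ H).toLinearMap ∘ₗ
    (TensorProduct.lid ℂ (H ⊗[ℂ] ℂ)).toLinearMap ∘ₗ
    TensorProduct.map F (TensorProduct.map (LinearMap.mul' ℂ H) Finv) ∘ₗ
    TensorProduct.map LinearMap.id (comul2 H) ∘ₗ comul2 H

/-- The universal R-matrix `R(h, g) := F(g₍₁₎, h₍₁₎) F⁻¹(h₍₂₎, g₍₂₎)`. -/
def Rmat (F Finv : (H ⊗[ℂ] H) →ₗ[ℂ] ℂ) : (H ⊗[ℂ] H) →ₗ[ℂ] ℂ :=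
  conv2 H (F ∘ₗ (TensorProduct.comm ℂ H H).toLinearMap) Finv


namespace Stmt4Aux

open Coalgebra

/-! ### Generic convolution machinery -/

section cvdef
variable {C D A : Type} [AddCommGroup C] [Module ℂ C] [Coalgebra ℂ C]
  [AddCommGroup D] [Module ℂ D] [Coalgebra ℂ D] [Ring A] [Algebra ℂ A]

/-- Convolution product of two linear maps from a coalgebra to an algebra. -/
def cv (f g : C →ₗ[ℂ] A) : C →ₗ[ℂ] A :=
  mul' ℂ A ∘ₗ TensorProduct.map f g ∘ₗ Coalgebra.comul

/-- The unit for convolution. -/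
def cu : C →ₗ[ℂ] A := Algebra.linearMap ℂ A ∘ₗ Coalgebra.counit

lemma cv_apply (f g : C →ₗ[ℂ] A) (x : C) {ι : Type*} (r : Coalgebra.Repr ℂ x ι) :
    cv f g x = ∑ i ∈ r.index, f (r.left i) * g (r.right i) := by
  simp only [cv, comp_apply, ← r.eq, map_sum, TensorProduct.map_tmul, mul'_apply]

lemma cv_assoc (f g h : C →ₗ[ℂ] A) : cv (cv f g) h = cv f (cv g h) := by
  ext x
  have key := Coalgebra.sum_map_tmul_tmul_eq (R := ℂ) (f := f) (g := g) (h := h) x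
    (repr := ℛ ℂ x) (a₁ := fun i => ℛ ℂ _) (a₂ := fun i => ℛ ℂ _)
  have key2 := congrArg (mul' ℂ A ∘ₗ lTensor A (mul' ℂ A)) key
  simp only [map_sum, comp_apply, lTensor_tmul, mul'_apply] at key2
  rw [cv_apply _ _ x (ℛ ℂ x), cv_apply _ _ x (ℛ ℂ x)]
  calc ∑ i ∈ (ℛ ℂ x).index, cv f g ((ℛ ℂ x).left i) * h ((ℛ ℂ x).right i)
      = ∑ i ∈ (ℛ ℂ x).index, ∑ j ∈ (ℛ ℂ ((ℛ ℂ x).left i)).index,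
          f ((ℛ ℂ ((ℛ ℂ x).left i)).left j) *
            (g ((ℛ ℂ ((ℛ ℂ x).left i)).right j) * h ((ℛ ℂ x).right i)) := by
        refine Finset.sum_congr rfl fun i _ => ?_
        rw [cv_apply _ _ _ (ℛ ℂ ((ℛ ℂ x).left i)), Finset.sum_mul]
        simp only [mul_assoc]
    _ = ∑ i ∈ (ℛ ℂ x).index, ∑ j ∈ (ℛ ℂ ((ℛ ℂ x).right i)).index,
          f ((ℛ ℂ x).left i) *
            (g ((ℛ ℂ ((ℛ ℂ x).right i)).left j) * h ((ℛ ℂ ((ℛ ℂ x).right i)).right j)) :=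
        key2.symm
    _ = ∑ i ∈ (ℛ ℂ x).index, f ((ℛ ℂ x).left i) * cv g h ((ℛ ℂ x).right i) := by
        refine Finset.sum_congr rfl fun i _ => ?_
        rw [cv_apply _ _ _ (ℛ ℂ ((ℛ ℂ x).right i)), Finset.mul_sum]

lemma cv_cu_left (f : C →ₗ[ℂ] A) : cv cu f = f := by
  ext x
  have key := Coalgebra.sum_counit_tmul_map_eq (R := ℂ) (f := f) x (repr := ℛ ℂ x)
  have key2 := congrArg (TensorProduct.lid ℂ A) key
  simp only [map_sum, lid_tmul, one_smul] at key2
  rw [cv_apply _ _ x (ℛ ℂ x)]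
  simp only [cu, comp_apply, Algebra.linearMap_apply, Algebra.algebraMap_eq_smul_one,
    smul_mul_assoc, one_mul]
  exact key2

lemma cv_cu_right (f : C →ₗ[ℂ] A) : cv f cu = f := by
  ext x
  have key := Coalgebra.sum_map_tmul_counit_eq (R := ℂ) (f := f) x (repr := ℛ ℂ x)
  have key2 := congrArg (TensorProduct.rid ℂ A) key
  simp only [map_sum, rid_tmul, one_smul] at key2
  rw [cv_apply _ _ x (ℛ ℂ x)]
  simp only [cu, comp_apply, Algebra.linearMap_apply, Algebra.algebraMap_eq_smul_one,
    mul_smul_comm, mul_one]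
  exact key2

lemma sum_counit_smul {c : C} {ι : Type*} (r : Coalgebra.Repr ℂ c ι) :
    ∑ i ∈ r.index, Coalgebra.counit (R := ℂ) (r.left i) • r.right i = c := by
  have h2 := congrArg (TensorProduct.lid ℂ C) (Coalgebra.sum_counit_tmul_eq r)
  rw [map_sum] at h2
  simp only [lid_tmul] at h2
  rwa [one_smul] at h2

lemma sum_smul_counit {c : C} {ι : Type*} (r : Coalgebra.Repr ℂ c ι) :
    ∑ i ∈ r.index, Coalgebra.counit (R := ℂ) (r.right i) • r.left i = c := by
  have h2 := congrArg (TensorProduct.rid ℂ C) (Coalgebra.sum_tmul_counit_eq r)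
  rw [map_sum] at h2
  simp only [rid_tmul] at h2
  rwa [one_smul] at h2

/-- Expansion of the comultiplication of a tensor product coalgebra on a pure tensor. -/
lemma comul_tmul (c : C) (d : D) {ι κ : Type*} (rc : Coalgebra.Repr ℂ c ι) (rd : Coalgebra.Repr ℂ d κ) :
    Coalgebra.comul (R := ℂ) (c ⊗ₜ[ℂ] d)
      = ∑ i ∈ rc.index, ∑ j ∈ rd.index,
          (rc.left i ⊗ₜ[ℂ] rd.left j) ⊗ₜ[ℂ] (rc.right i ⊗ₜ[ℂ] rd.right j) := by
  simp only [TensorProduct.comul_def, comp_apply, TensorProduct.map_tmul, AlgebraTensorModule.map_tmul]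
  rw [← rc.eq, ← rd.eq, sum_tmul, map_sum]
  refine Finset.sum_congr rfl fun i _ => ?_
  rw [tmul_sum, map_sum]
  rfl

lemma cv_tmul_apply (f g : C ⊗[ℂ] D →ₗ[ℂ] A) (c : C) (d : D)
    {ι κ : Type*} (rc : Coalgebra.Repr ℂ c ι) (rd : Coalgebra.Repr ℂ d κ) :
    cv f g (c ⊗ₜ[ℂ] d) = ∑ i ∈ rc.index, ∑ j ∈ rd.index,
      f (rc.left i ⊗ₜ[ℂ] rd.left j) * g (rc.right i ⊗ₜ[ℂ] rd.right j) := by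
  simp only [cv, comp_apply, comul_tmul c d rc rd, map_sum, TensorProduct.map_tmul, mul'_apply]

/-- Master lemma: pulling a scalar convolution factor (on the left) out of the second slot. -/
lemma M3 (φ : D →ₗ[ℂ] ℂ) (U : D →ₗ[ℂ] A) (X : C ⊗[ℂ] A →ₗ[ℂ] ℂ) :
    X ∘ₗ TensorProduct.map LinearMap.id (cv (Algebra.linearMap ℂ A ∘ₗ φ) U)
      = cv (φ ∘ₗ (TensorProduct.lid ℂ D).toLinearMap ∘ₗ
            TensorProduct.map Coalgebra.counit LinearMap.id)
          (X ∘ₗ TensorProduct.map LinearMap.id U) := by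
  apply TensorProduct.ext'
  intro c d
  set rc := ℛ ℂ c
  set rd := ℛ ℂ d
  have hL : (X ∘ₗ TensorProduct.map LinearMap.id
      (cv (Algebra.linearMap ℂ A ∘ₗ φ) U)) (c ⊗ₜ[ℂ] d)
      = ∑ j ∈ rd.index, φ (rd.left j) * X (c ⊗ₜ[ℂ] U (rd.right j)) := by
    simp only [comp_apply, TensorProduct.map_tmul, id_coe, _root_.id]
    rw [cv_apply _ _ d rd]
    simp only [comp_apply, Algebra.linearMap_apply, Algebra.algebraMap_eq_smul_one,
      smul_mul_assoc, one_mul, tmul_sum, tmul_smul, map_sum, map_smul, smul_eq_mul]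
  rw [hL, cv_tmul_apply _ _ c d rc rd]
  simp only [comp_apply, TensorProduct.map_tmul, LinearEquiv.coe_coe, lid_tmul, id_coe,
    _root_.id, map_smul, smul_eq_mul]
  rw [Finset.sum_comm]
  refine Finset.sum_congr rfl fun j _ => ?_
  have : ∑ i ∈ rc.index, Coalgebra.counit (R := ℂ) (rc.left i) * φ (rd.left j) *
      X (rc.right i ⊗ₜ[ℂ] U (rd.right j))
      = φ (rd.left j) * X ((∑ i ∈ rc.index,
          Coalgebra.counit (R := ℂ) (rc.left i) • rc.right i) ⊗ₜ[ℂ] U (rd.right j)) := by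
    rw [sum_tmul, map_sum, Finset.mul_sum]
    refine Finset.sum_congr rfl fun i _ => ?_
    rw [← smul_tmul', map_smul, smul_eq_mul]
    ring
  rw [this, sum_counit_smul rc]

/-- Master lemma: pulling a scalar convolution factor (on the right) out of the second slot. -/
lemma M4 (ψ : D →ₗ[ℂ] ℂ) (U : D →ₗ[ℂ] A) (X : C ⊗[ℂ] A →ₗ[ℂ] ℂ) :
    X ∘ₗ TensorProduct.map LinearMap.id (cv U (Algebra.linearMap ℂ A ∘ₗ ψ))
      = cv (X ∘ₗ TensorProduct.map LinearMap.id U)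
          (ψ ∘ₗ (TensorProduct.lid ℂ D).toLinearMap ∘ₗ
            TensorProduct.map Coalgebra.counit LinearMap.id) := by
  apply TensorProduct.ext'
  intro c d
  set rc := ℛ ℂ c
  set rd := ℛ ℂ d
  have hL : (X ∘ₗ TensorProduct.map LinearMap.id
      (cv U (Algebra.linearMap ℂ A ∘ₗ ψ))) (c ⊗ₜ[ℂ] d)
      = ∑ j ∈ rd.index, X (c ⊗ₜ[ℂ] U (rd.left j)) * ψ (rd.right j) := by
    simp only [comp_apply, TensorProduct.map_tmul, id_coe, _root_.id]
    rw [cv_apply _ _ d rd]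
    simp only [comp_apply, Algebra.linearMap_apply, Algebra.algebraMap_eq_smul_one,
      mul_smul_comm, mul_one, tmul_sum, tmul_smul, map_sum, map_smul, smul_eq_mul]
    exact Finset.sum_congr rfl fun j _ => mul_comm _ _
  rw [hL, cv_tmul_apply _ _ c d rc rd]
  simp only [comp_apply, TensorProduct.map_tmul, LinearEquiv.coe_coe, lid_tmul, id_coe,
    _root_.id, map_smul, smul_eq_mul]
  rw [Finset.sum_comm]
  refine Finset.sum_congr rfl fun j _ => ?_
  have : ∑ i ∈ rc.index, X (rc.left i ⊗ₜ[ℂ] U (rd.left j)) *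
      (Coalgebra.counit (R := ℂ) (rc.right i) * ψ (rd.right j))
      = X ((∑ i ∈ rc.index,
          Coalgebra.counit (R := ℂ) (rc.right i) • rc.left i) ⊗ₜ[ℂ] U (rd.left j)) *
          ψ (rd.right j) := by
    rw [sum_tmul, map_sum, Finset.sum_mul]
    refine Finset.sum_congr rfl fun i _ => ?_
    rw [← smul_tmul', map_smul, smul_eq_mul]
    ring
  rw [this, sum_smul_counit rc]

end cvdef

/-! ### Coalgebra morphisms (unbundled) -/

structure IsCM {C D : Type} [AddCommGroup C] [Module ℂ C] [Coalgebra ℂ C]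
    [AddCommGroup D] [Module ℂ D] [Coalgebra ℂ D] (θ : D →ₗ[ℂ] C) : Prop where
  comul_comp : Coalgebra.comul ∘ₗ θ = TensorProduct.map θ θ ∘ₗ Coalgebra.comul
  counit_comp : Coalgebra.counit ∘ₗ θ = Coalgebra.counit

section iscm
variable {C D E C' D' : Type} [AddCommGroup C] [Module ℂ C] [Coalgebra ℂ C]
  [AddCommGroup D] [Module ℂ D] [Coalgebra ℂ D]
  [AddCommGroup E] [Module ℂ E] [Coalgebra ℂ E]
  [AddCommGroup C'] [Module ℂ C'] [Coalgebra ℂ C']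
  [AddCommGroup D'] [Module ℂ D'] [Coalgebra ℂ D']
  {A : Type} [Ring A] [Algebra ℂ A]

lemma IsCM.comp {θ : D →ₗ[ℂ] C} {η : E →ₗ[ℂ] D} (hθ : IsCM θ) (hη : IsCM η) :
    IsCM (θ ∘ₗ η) := by
  constructor
  · rw [← comp_assoc, hθ.comul_comp, comp_assoc, hη.comul_comp, ← comp_assoc,
      ← TensorProduct.map_comp]
  · rw [← comp_assoc, hθ.counit_comp, hη.counit_comp]

/-- Package an `IsCM` as a bundled coalgebra morphism. -/
def IsCM.toCoalgHom {θ : D →ₗ[ℂ] C} (h : IsCM θ) : D →ₗc[ℂ] C :=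
  { θ with
    counit_comp := h.counit_comp
    map_comp_comul := h.comul_comp.symm }

lemma IsCM.ofCoalgHom (f : D →ₗc[ℂ] C) : IsCM (f : D →ₗ[ℂ] C) :=
  ⟨f.map_comp_comul.symm, f.counit_comp⟩

lemma isCM_id : IsCM (LinearMap.id : C →ₗ[ℂ] C) :=
  ⟨by simp [TensorProduct.map_id], by simp⟩

lemma IsCM.map {θ : D →ₗ[ℂ] C} {η : D' →ₗ[ℂ] C'} (hθ : IsCM θ) (hη : IsCM η) :
    IsCM (TensorProduct.map θ η) :=
  IsCM.ofCoalgHom (Coalgebra.TensorProduct.map hθ.toCoalgHom hη.toCoalgHom)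

lemma isCM_assoc : IsCM ((TensorProduct.assoc ℂ C D E).toLinearMap :
    (C ⊗[ℂ] D) ⊗[ℂ] E →ₗ[ℂ] C ⊗[ℂ] (D ⊗[ℂ] E)) :=
  IsCM.ofCoalgHom (Coalgebra.TensorProduct.assoc ℂ ℂ C D E).toCoalgHom

lemma isCM_assoc_symm : IsCM ((TensorProduct.assoc ℂ C D E).symm.toLinearMap :
    C ⊗[ℂ] (D ⊗[ℂ] E) →ₗ[ℂ] (C ⊗[ℂ] D) ⊗[ℂ] E) :=
  IsCM.ofCoalgHom (Coalgebra.TensorProduct.assoc ℂ ℂ C D E).symm.toCoalgHom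

lemma isCM_lid : IsCM ((TensorProduct.lid ℂ C).toLinearMap : ℂ ⊗[ℂ] C →ₗ[ℂ] C) :=
  IsCM.ofCoalgHom (Coalgebra.TensorProduct.lid ℂ C).toCoalgHom

lemma isCM_rid : IsCM ((TensorProduct.rid ℂ C).toLinearMap : C ⊗[ℂ] ℂ →ₗ[ℂ] C) :=
  IsCM.ofCoalgHom (Coalgebra.TensorProduct.rid ℂ ℂ C).toCoalgHom

lemma isCM_counit : IsCM (Coalgebra.counit : C →ₗ[ℂ] ℂ) :=
  IsCM.ofCoalgHom (Coalgebra.counitCoalgHom ℂ C)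

lemma isCM_comm : IsCM ((TensorProduct.comm ℂ C D).toLinearMap :
    C ⊗[ℂ] D →ₗ[ℂ] D ⊗[ℂ] C) := by
  constructor
  · have h2 : (TensorProduct.tensorTensorTensorComm ℂ D D C C).toLinearMap ∘ₗ
        (TensorProduct.comm ℂ (C ⊗[ℂ] C) (D ⊗[ℂ] D)).toLinearMap
        = TensorProduct.map (TensorProduct.comm ℂ C D).toLinearMap
            (TensorProduct.comm ℂ C D).toLinearMap ∘ₗ
          (TensorProduct.tensorTensorTensorComm ℂ C C D D).toLinearMap := by
      ext a b x y
      simp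
    apply TensorProduct.ext'
    intro c d
    have key := LinearMap.congr_fun h2
      ((Coalgebra.comul (R := ℂ) c) ⊗ₜ[ℂ] (Coalgebra.comul (R := ℂ) d))
    simp only [comp_apply, LinearEquiv.coe_coe, comm_tmul] at key
    simp only [comp_apply, LinearEquiv.coe_coe, comm_tmul,
      TensorProduct.comul_def, TensorProduct.map_tmul]
    exact key
  · apply TensorProduct.ext'
    intro c d
    simp [mul_comm]

/-- Multiplication of a bialgebra is a coalgebra morphism. -/
lemma isCM_mul {B : Type} [Ring B] [Bialgebra ℂ B] :
    IsCM (mul' ℂ B : B ⊗[ℂ] B →ₗ[ℂ] B) := by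
  constructor
  · have aux : TensorProduct.map (mul' ℂ B) (mul' ℂ B) ∘ₗ
        (TensorProduct.tensorTensorTensorComm ℂ B B B B).toLinearMap
        = mul' ℂ (B ⊗[ℂ] B) := by
      apply TensorProduct.ext_fourfold'
      intro w x y z
      simp [Algebra.TensorProduct.tmul_mul_tmul]
    apply TensorProduct.ext'
    intro a b
    have key := LinearMap.congr_fun aux
      ((Coalgebra.comul (R := ℂ) a) ⊗ₜ[ℂ] (Coalgebra.comul (R := ℂ) b))
    simp only [comp_apply, LinearEquiv.coe_coe, mul'_apply] at key
    simp only [comp_apply, mul'_apply, TensorProduct.comul_def,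
      TensorProduct.map_tmul, LinearEquiv.coe_coe]
    rw [Bialgebra.comul_mul]
    exact key.symm
  · apply TensorProduct.ext'
    intro a b
    simp [Bialgebra.counit_mul, mul_comm]

/-- Convolution is natural under precomposition with coalgebra morphisms. -/
lemma cv_comp {θ : D →ₗ[ℂ] C} (hθ : IsCM θ) (f g : C →ₗ[ℂ] A) :
    cv f g ∘ₗ θ = cv (f ∘ₗ θ) (g ∘ₗ θ) := by
  rw [cv, cv, TensorProduct.map_comp]
  simp only [comp_assoc]
  rw [hθ.comul_comp]

lemma cu_comp {θ : D →ₗ[ℂ] C} (hθ : IsCM θ) : (cu : C →ₗ[ℂ] A) ∘ₗ θ = cu := by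
  rw [cu, cu]
  simp only [comp_assoc]
  rw [hθ.counit_comp]

end iscm

/-! ### Scalar-valued helpers -/

section scalar
variable {C : Type} [AddCommGroup C] [Module ℂ C] [Coalgebra ℂ C]

lemma cu_eq : (cu : C →ₗ[ℂ] ℂ) = Coalgebra.counit := by
  ext x
  simp [cu]

lemma cv_counit_left (f : C →ₗ[ℂ] ℂ) : cv Coalgebra.counit f = f := by
  rw [← cu_eq]; exact cv_cu_left f

lemma cv_counit_right (f : C →ₗ[ℂ] ℂ) : cv f Coalgebra.counit = f := by
  rw [← cu_eq]; exact cv_cu_right f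

lemma pair_rw {a b c d z : C →ₗ[ℂ] ℂ} (h : cv a b = cv c d) :
    cv a (cv b z) = cv c (cv d z) := by
  rw [← cv_assoc, h, cv_assoc]

lemma cv_solve {a a' b X : C →ₗ[ℂ] ℂ} (h : cv a b = X)
    (ha : cv a' a = Coalgebra.counit) : b = cv a' X := by
  rw [← h, ← cv_assoc, ha, cv_counit_left]

lemma cv_cancel {a a' : C →ₗ[ℂ] ℂ} (h : cv a a' = Coalgebra.counit)
    (z : C →ₗ[ℂ] ℂ) : cv a (cv a' z) = z := by
  rw [← cv_assoc, h, cv_counit_left]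

end scalar

/-! ### Scalar embedding into the algebra -/

section iota
variable {C : Type} [AddCommGroup C] [Module ℂ C] [Coalgebra ℂ C]
  {A : Type} [Ring A] [Algebra ℂ A]

lemma cv_iota (φ ψ : C →ₗ[ℂ] ℂ) :
    cv (Algebra.linearMap ℂ A ∘ₗ φ) (Algebra.linearMap ℂ A ∘ₗ ψ)
      = Algebra.linearMap ℂ A ∘ₗ cv φ ψ := by
  have frame : mul' ℂ A ∘ₗ TensorProduct.map (Algebra.linearMap ℂ A) (Algebra.linearMap ℂ A)
      = Algebra.linearMap ℂ A ∘ₗ mul' ℂ ℂ := by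
    apply TensorProduct.ext'
    intro a b
    simp [mul'_apply, ← map_mul]
  rw [cv, cv, TensorProduct.map_comp]
  simp only [← comp_assoc]
  rw [frame]

/-- `x ↦ Σ ψ(x₂) U(x₁)` as a convolution. -/
lemma fr3 (U : C →ₗ[ℂ] A) (ψ : C →ₗ[ℂ] ℂ) :
    cv U (Algebra.linearMap ℂ A ∘ₗ ψ)
      = (TensorProduct.rid ℂ A).toLinearMap ∘ₗ TensorProduct.map U ψ ∘ₗ Coalgebra.comul := by
  have frame : mul' ℂ A ∘ₗ TensorProduct.map (LinearMap.id (M := A)) (Algebra.linearMap ℂ A)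
      = (TensorProduct.rid ℂ A).toLinearMap := by
    apply TensorProduct.ext'
    intro a b
    simp [mul'_apply, Algebra.algebraMap_eq_smul_one, mul_smul_comm]
  have dec : TensorProduct.map U (Algebra.linearMap ℂ A ∘ₗ ψ)
      = TensorProduct.map LinearMap.id (Algebra.linearMap ℂ A) ∘ₗ TensorProduct.map U ψ := by
    rw [← TensorProduct.map_comp, LinearMap.id_comp]
  rw [cv, dec]
  simp only [← comp_assoc]
  rw [frame]

/-- `x ↦ Σ φ(x₁) U(x₂)` as a convolution. -/
lemma fr4 (φ : C →ₗ[ℂ] ℂ) (U : C →ₗ[ℂ] A) :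
    cv (Algebra.linearMap ℂ A ∘ₗ φ) U
      = (TensorProduct.lid ℂ A).toLinearMap ∘ₗ TensorProduct.map φ U ∘ₗ Coalgebra.comul := by
  have frame : mul' ℂ A ∘ₗ TensorProduct.map (Algebra.linearMap ℂ A) (LinearMap.id (M := A))
      = (TensorProduct.lid ℂ A).toLinearMap := by
    apply TensorProduct.ext'
    intro a b
    simp [mul'_apply, Algebra.algebraMap_eq_smul_one, smul_mul_assoc]
  have dec : TensorProduct.map (Algebra.linearMap ℂ A ∘ₗ φ) U
      = TensorProduct.map (Algebra.linearMap ℂ A) LinearMap.id ∘ₗ TensorProduct.map φ U := by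
    rw [← TensorProduct.map_comp, LinearMap.id_comp]
  rw [cv, dec]
  simp only [← comp_assoc]
  rw [frame]

end iota

/-! ### Specific coalgebra maps on `H ⊗ (H ⊗ H)` -/

section hmaps


/-- The flip on `H ⊗ H`. -/
def tauX : H ⊗[ℂ] H →ₗ[ℂ] H ⊗[ℂ] H := (TensorProduct.comm ℂ H H).toLinearMap

/-- Projection to legs 1,2. -/
def p12x : H ⊗[ℂ] (H ⊗[ℂ] H) →ₗ[ℂ] H ⊗[ℂ] H :=
  TensorProduct.map LinearMap.id
    ((TensorProduct.rid ℂ H).toLinearMap ∘ₗ TensorProduct.map LinearMap.id Coalgebra.counit)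

/-- Projection to legs 1,3. -/
def p13x : H ⊗[ℂ] (H ⊗[ℂ] H) →ₗ[ℂ] H ⊗[ℂ] H :=
  TensorProduct.map LinearMap.id
    ((TensorProduct.lid ℂ H).toLinearMap ∘ₗ TensorProduct.map Coalgebra.counit LinearMap.id)

/-- Projection to legs 2,3. -/
def p23x : H ⊗[ℂ] (H ⊗[ℂ] H) →ₗ[ℂ] H ⊗[ℂ] H :=
  (TensorProduct.lid ℂ (H ⊗[ℂ] H)).toLinearMap ∘ₗ
    TensorProduct.map Coalgebra.counit LinearMap.id

/-- Multiply legs 2,3. -/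
def m23x : H ⊗[ℂ] (H ⊗[ℂ] H) →ₗ[ℂ] H ⊗[ℂ] H :=
  TensorProduct.map LinearMap.id (mul' ℂ H)

/-- Multiply legs 1,2. -/
def mu12x : H ⊗[ℂ] (H ⊗[ℂ] H) →ₗ[ℂ] H ⊗[ℂ] H :=
  TensorProduct.map (mul' ℂ H) LinearMap.id ∘ₗ (TensorProduct.assoc ℂ H H H).symm.toLinearMap

/-- `f ⊗ (g ⊗ h) ↦ h ⊗ (f ⊗ g)`. -/
def s2x : H ⊗[ℂ] (H ⊗[ℂ] H) →ₗ[ℂ] H ⊗[ℂ] (H ⊗[ℂ] H) :=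
  (TensorProduct.comm ℂ (H ⊗[ℂ] H) H).toLinearMap ∘ₗ (TensorProduct.assoc ℂ H H H).symm.toLinearMap

/-- `f ⊗ (g ⊗ h) ↦ g ⊗ (f ⊗ h)`. -/
def s4x : H ⊗[ℂ] (H ⊗[ℂ] H) →ₗ[ℂ] H ⊗[ℂ] (H ⊗[ℂ] H) :=
  (TensorProduct.assoc ℂ H H H).toLinearMap ∘ₗ
    TensorProduct.map (TensorProduct.comm ℂ H H).toLinearMap LinearMap.id ∘ₗ
    (TensorProduct.assoc ℂ H H H).symm.toLinearMap

/-- `f ⊗ (g ⊗ h) ↦ f ⊗ (h ⊗ g)`. -/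
def s5x : H ⊗[ℂ] (H ⊗[ℂ] H) →ₗ[ℂ] H ⊗[ℂ] (H ⊗[ℂ] H) :=
  TensorProduct.map LinearMap.id (TensorProduct.comm ℂ H H).toLinearMap

/-- `f ⊗ (g ⊗ h) ↦ g ⊗ (h ⊗ f)`. -/
def cycx : H ⊗[ℂ] (H ⊗[ℂ] H) →ₗ[ℂ] H ⊗[ℂ] (H ⊗[ℂ] H) :=
  (TensorProduct.assoc ℂ H H H).toLinearMap ∘ₗ (TensorProduct.comm ℂ H (H ⊗[ℂ] H)).toLinearMap

lemma isCM_tau : IsCM (tauX (H := H)) := isCM_comm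

lemma isCM_p12 : IsCM (p12x (H := H)) :=
  IsCM.map isCM_id (IsCM.comp isCM_rid (IsCM.map isCM_id isCM_counit))

lemma isCM_p13 : IsCM (p13x (H := H)) :=
  IsCM.map isCM_id (IsCM.comp isCM_lid (IsCM.map isCM_counit isCM_id))

lemma isCM_p23 : IsCM (p23x (H := H)) :=
  IsCM.comp isCM_lid (IsCM.map isCM_counit isCM_id)

lemma isCM_m23 : IsCM (m23x (H := H)) := IsCM.map isCM_id isCM_mul

lemma isCM_mu12 : IsCM (mu12x (H := H)) :=
  IsCM.comp (IsCM.map isCM_mul isCM_id) isCM_assoc_symm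

lemma isCM_s2 : IsCM (s2x (H := H)) := IsCM.comp isCM_comm isCM_assoc_symm

lemma isCM_s4 : IsCM (s4x (H := H)) :=
  IsCM.comp isCM_assoc (IsCM.comp (IsCM.map isCM_comm isCM_id) isCM_assoc_symm)

lemma isCM_s5 : IsCM (s5x (H := H)) := IsCM.map isCM_id isCM_comm

lemma isCM_cyc : IsCM (cycx (H := H)) := IsCM.comp isCM_assoc isCM_comm

/-! Pure-tensor relations between the structure maps. -/

lemma req0 : (TensorProduct.rid ℂ (H ⊗[ℂ] H)).toLinearMap ∘ₗ
    TensorProduct.map LinearMap.id Coalgebra.counit ∘ₗ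
    (TensorProduct.assoc ℂ H H H).symm.toLinearMap = p12x (H := H) := by
  ext f g h
  simp [p12x]

lemma r1 : p23x ∘ₗ s2x = p12x (H := H) := by ext f g h; simp [p23x, s2x, p12x]

lemma r2 : m23x ∘ₗ s2x = tauX ∘ₗ mu12x (H := H) := by
  ext f g h; simp [m23x, s2x, tauX, mu12x]

lemma r3 : p12x ∘ₗ s2x = tauX ∘ₗ p13x (H := H) := by
  ext f g h; simp [p12x, s2x, tauX, p13x]

lemma r4 : mu12x ∘ₗ s2x = mu12x ∘ₗ s5x (H := H) := by
  ext f g h; simp [mu12x, s2x, s5x, mul_comm]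

lemma r5 : p23x ∘ₗ s5x = tauX ∘ₗ p23x (H := H) := by
  ext f g h; simp [p23x, s5x, tauX]

lemma r6 : m23x ∘ₗ s5x = m23x (H := H) := by
  ext f g h; simp [m23x, s5x, mul_comm]

lemma r7 : p12x ∘ₗ s5x = p13x (H := H) := by ext f g h; simp [p12x, s5x, p13x]

lemma r8 : p23x ∘ₗ cycx = tauX ∘ₗ p13x (H := H) := by
  ext f g h; simp [p23x, cycx, tauX, p13x]

lemma r9 : m23x ∘ₗ cycx = m23x ∘ₗ s4x (H := H) := by
  ext f g h; simp [m23x, cycx, s4x, mul_comm]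

lemma r10 : p12x ∘ₗ cycx = p23x (H := H) := by ext f g h; simp [p12x, cycx, p23x]

lemma r11 : mu12x ∘ₗ cycx = tauX ∘ₗ m23x (H := H) := by
  ext f g h; simp [mu12x, cycx, tauX, m23x]

lemma r12 : p23x ∘ₗ s4x = p13x (H := H) := by ext f g h; simp [p23x, s4x, p13x]

lemma r13 : p12x ∘ₗ s4x = tauX ∘ₗ p12x (H := H) := by
  ext f g h; simp [p12x, s4x, tauX]

lemma r14 : mu12x ∘ₗ s4x = mu12x (H := H) := by
  ext f g h; simp [mu12x, s4x, mul_comm]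

lemma r15 : tauX ∘ₗ tauX = (LinearMap.id : H ⊗[ℂ] H →ₗ[ℂ] H ⊗[ℂ] H) := by
  ext f g; simp [tauX]

lemma r15' {M : Type} [AddCommGroup M] [Module ℂ M] (θ : M →ₗ[ℂ] H ⊗[ℂ] H) :
    tauX ∘ₗ (tauX ∘ₗ θ) = θ := by
  rw [← comp_assoc, r15, id_comp]

lemma rmul : mul' ℂ H ∘ₗ tauX = mul' ℂ H := by
  apply TensorProduct.ext'
  intro a b
  simp [tauX, mul_comm]

/-- `f ⊗ (g⊗h) ↦ (f⊗g)⊗h ↦ u(f⊗g) ⊗ h` rewritten through the flip. -/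
lemma r17 (u : H ⊗[ℂ] H →ₗ[ℂ] H) :
    TensorProduct.map u LinearMap.id ∘ₗ (TensorProduct.assoc ℂ H H H).symm.toLinearMap
      = tauX ∘ₗ TensorProduct.map LinearMap.id u ∘ₗ s2x := by
  ext f g h
  simp [tauX, s2x]

/-- Convolving `counit` in the first slot. -/
lemma r18 (X : H ⊗[ℂ] H →ₗ[ℂ] ℂ) :
    mul' ℂ ℂ ∘ₗ TensorProduct.map Coalgebra.counit X = X ∘ₗ p23x (H := H) := by
  apply TensorProduct.ext'
  intro f y
  simp [p23x, mul'_apply]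

end hmaps

section morehelp
variable {C : Type} [AddCommGroup C] [Module ℂ C] [Coalgebra ℂ C]
  {A : Type} [Ring A] [Algebra ℂ A]

lemma cv_cancel_cu {a a' : C →ₗ[ℂ] A} (h : cv a a' = cu) (z : C →ₗ[ℂ] A) :
    cv a (cv a' z) = z := by
  rw [← cv_assoc, h, cv_cu_left]

lemma cv_solve_right {a a' b X : C →ₗ[ℂ] ℂ} (h : cv b a = X)
    (ha : cv a a' = Coalgebra.counit) : b = cv X a' := by
  rw [← h, cv_assoc, ha, cv_counit_right]

set_option maxHeartbeats 1000000 in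
/-- The abstract convolution-algebra computation behind both bicharacter identities. -/
lemma key_abstract {u1 u2 s t w1a w2a r q z q' t' q'' v2 v1 : C →ₗ[ℂ] ℂ}
    (h1 : cv u1 u2 = cv w1a s)
    (h2 : cv t s = cv w2a r)
    (h3 : cv q z = cv q' r)
    (i1 : cv t' t = Coalgebra.counit)
    (i2 : cv q'' q' = Coalgebra.counit)
    (i3 : cv z v2 = Coalgebra.counit)
    (i4 : cv q v1 = Coalgebra.counit) :
    cv u1 (cv (cv u2 v2) v1) = cv (cv w1a t') (cv w2a q'') := by
  have hs : s = cv t' (cv w2a r) := cv_solve h2 i1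
  have hr : r = cv q'' (cv q z) := cv_solve h3.symm i2
  calc cv u1 (cv (cv u2 v2) v1)
      = cv u1 (cv u2 (cv v2 v1)) := by rw [cv_assoc u2 v2 v1]
    _ = cv w1a (cv s (cv v2 v1)) := pair_rw h1
    _ = cv w1a (cv (cv t' (cv w2a r)) (cv v2 v1)) := by rw [← hs]
    _ = cv w1a (cv t' (cv (cv w2a r) (cv v2 v1))) := by
          rw [cv_assoc t' (cv w2a r) (cv v2 v1)]
    _ = cv w1a (cv t' (cv w2a (cv r (cv v2 v1)))) := by
          rw [cv_assoc w2a r (cv v2 v1)]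
    _ = cv w1a (cv t' (cv w2a (cv (cv q'' (cv q z)) (cv v2 v1)))) := by rw [← hr]
    _ = cv w1a (cv t' (cv w2a (cv q'' (cv (cv q z) (cv v2 v1))))) := by
          rw [cv_assoc q'' (cv q z) (cv v2 v1)]
    _ = cv w1a (cv t' (cv w2a (cv q'' (cv q (cv z (cv v2 v1)))))) := by
          rw [cv_assoc q z (cv v2 v1)]
    _ = cv w1a (cv t' (cv w2a (cv q'' (cv q v1)))) := by rw [cv_cancel i3 v1]
    _ = cv w1a (cv t' (cv w2a (cv q'' Coalgebra.counit))) := by rw [i4]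
    _ = cv w1a (cv t' (cv w2a q'')) := by rw [cv_counit_right]
    _ = cv (cv w1a t') (cv w2a q'') := by rw [cv_assoc w1a t' (cv w2a q'')]

end morehelp

end Stmt4Aux

namespace Stmt4Aux

lemma comul2_eq : comul2 H = Coalgebra.comul := rfl

lemma counit2_eq : counit2 H = Coalgebra.counit := by
  apply TensorProduct.ext'
  intro a b
  simp [counit2, mul_comm]

lemma counit3_eq : counit3 H = Coalgebra.counit := by
  apply TensorProduct.ext'
  intro a y
  induction y using TensorProduct.induction_on with
  | zero => simp
  | tmul b c => simp [counit3, counit2, mul_comm, mul_left_comm]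
  | add y z hy hz => simp only [tmul_add, map_add, hy, hz]

/-- The twisted product as a double convolution. -/
lemma fr1 (F Finv : (H ⊗[ℂ] H) →ₗ[ℂ] ℂ) :
    twistedMul F Finv = cv (Algebra.linearMap ℂ H ∘ₗ F)
      (cv (mul' ℂ H) (Algebra.linearMap ℂ H ∘ₗ Finv)) := by
  rw [fr4, fr3]
  show (TensorProduct.rid ℂ H).toLinearMap ∘ₗ
      (TensorProduct.lid ℂ (H ⊗[ℂ] ℂ)).toLinearMap ∘ₗ
      TensorProduct.map F (TensorProduct.map (mul' ℂ H) Finv) ∘ₗ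
      TensorProduct.map LinearMap.id Coalgebra.comul ∘ₗ Coalgebra.comul = _
  have dec1 : TensorProduct.map F ((TensorProduct.rid ℂ H).toLinearMap ∘ₗ
      TensorProduct.map (mul' ℂ H) Finv ∘ₗ Coalgebra.comul)
      = TensorProduct.map LinearMap.id (TensorProduct.rid ℂ H).toLinearMap ∘ₗ
        TensorProduct.map F (TensorProduct.map (mul' ℂ H) Finv) ∘ₗ
        TensorProduct.map LinearMap.id Coalgebra.comul := by
    simp only [← TensorProduct.map_comp, LinearMap.id_comp, LinearMap.comp_id]
  rw [dec1]
  have frame2 : (TensorProduct.rid ℂ H).toLinearMap ∘ₗ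
      (TensorProduct.lid ℂ (H ⊗[ℂ] ℂ)).toLinearMap
      = (TensorProduct.lid ℂ H).toLinearMap ∘ₗ
        TensorProduct.map LinearMap.id (TensorProduct.rid ℂ H).toLinearMap := by
    apply TensorProduct.ext'
    intro c y
    simp
  simp only [← comp_assoc]
  rw [frame2]

end Stmt4Aux

open Stmt4Aux

set_option maxHeartbeats 2000000

/-- Let `H` be a commutative Hopf algebra and `F` a (unital,
convolution-invertible) two-cocycle on `H`.  Then `R(h,g) := F(g₍₁₎,h₍₁₎) F⁻¹(h₍₂₎,g₍₂₎)`
makes the twisted Hopf algebra `H_F` cotriangular:  `R` intertwines the twisted product and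
its opposite, it is a Hopf bicharacter with respect to the twisted product, its convolution
inverse is `R ∘ flip`; in particular `R(h₍₁₎,g₍₁₎) R(g₍₂₎,h₍₂₎) = ε(g) ε(h)`. -/
theorem stmt4
    (F Finv : (H ⊗[ℂ] H) →ₗ[ℂ] ℂ)
    (hFunit : ∀ h : H, F ((1 : H) ⊗ₜ[ℂ] h) = Coalgebra.counit h ∧
                        F (h ⊗ₜ[ℂ] (1 : H)) = Coalgebra.counit h)
    (hFconv : conv2 H F Finv = counit2 H ∧ conv2 H Finv F = counit2 H)
    (hcocycle : IsTwoCocycle F Finv) :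
    -- coquasitriangularity for the twisted product:
    -- `g₍₁₎ •_F h₍₁₎ R(h₍₂₎, g₍₂₎) = R(h₍₁₎, g₍₁₎) h₍₂₎ •_F g₍₂₎`
    ((TensorProduct.rid ℂ H).toLinearMap ∘ₗ
        TensorProduct.map (twistedMul F Finv ∘ₗ (TensorProduct.comm ℂ H H).toLinearMap)
          (Rmat F Finv) ∘ₗ comul2 H =
      (TensorProduct.lid ℂ H).toLinearMap ∘ₗ
        TensorProduct.map (Rmat F Finv) (twistedMul F Finv) ∘ₗ comul2 H) ∧
    -- bicharacter in the first argument: `R(f •_F g, h) = R(f, h₍₁₎) R(g, h₍₂₎)`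
    (Rmat F Finv ∘ₗ TensorProduct.map (twistedMul F Finv) LinearMap.id ∘ₗ
        (TensorProduct.assoc ℂ H H H).symm.toLinearMap =
      conv3 H
        (Rmat F Finv ∘ₗ TensorProduct.map LinearMap.id
          ((TensorProduct.lid ℂ H).toLinearMap ∘ₗ
            TensorProduct.map Coalgebra.counit LinearMap.id))
        ((LinearMap.mul' ℂ ℂ) ∘ₗ TensorProduct.map Coalgebra.counit (Rmat F Finv))) ∧
    -- bicharacter in the second argument: `R(f, g •_F h) = R(f₍₁₎, h) R(f₍₂₎, g)`
    (Rmat F Finv ∘ₗ TensorProduct.map LinearMap.id (twistedMul F Finv) =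
      conv3 H
        (Rmat F Finv ∘ₗ TensorProduct.map LinearMap.id
          ((TensorProduct.lid ℂ H).toLinearMap ∘ₗ
            TensorProduct.map Coalgebra.counit LinearMap.id))
        (Rmat F Finv ∘ₗ TensorProduct.map LinearMap.id
          ((TensorProduct.rid ℂ H).toLinearMap ∘ₗ
            TensorProduct.map LinearMap.id Coalgebra.counit))) ∧
    -- cotriangularity: `R(h₍₁₎, g₍₁₎) R(g₍₂₎, h₍₂₎) = ε(g) ε(h)` and its flip
    (conv2 H (Rmat F Finv) (Rmat F Finv ∘ₗ (TensorProduct.comm ℂ H H).toLinearMap) =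
        counit2 H) ∧
    (conv2 H (Rmat F Finv ∘ₗ (TensorProduct.comm ℂ H H).toLinearMap) (Rmat F Finv) =
        counit2 H) := by
  obtain ⟨hFF', hF'F⟩ := hFconv
  have hFF : cv F Finv = (Coalgebra.counit : H ⊗[ℂ] H →ₗ[ℂ] ℂ) := hFF'.trans counit2_eq
  have hF'Fc : cv Finv F = (Coalgebra.counit : H ⊗[ℂ] H →ₗ[ℂ] ℂ) := hF'F.trans counit2_eq
  have hRmat : Rmat F Finv = cv (F ∘ₗ tauX) Finv := rfl
  have invL : ∀ {θ : H ⊗[ℂ] (H ⊗[ℂ] H) →ₗ[ℂ] H ⊗[ℂ] H}, IsCM θ →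
      cv (F ∘ₗ θ) (Finv ∘ₗ θ)
        = (Coalgebra.counit : H ⊗[ℂ] (H ⊗[ℂ] H) →ₗ[ℂ] ℂ) := by
    intro θ hθ
    rw [← cv_comp hθ, hFF, hθ.counit_comp]
  have invR : ∀ {θ : H ⊗[ℂ] (H ⊗[ℂ] H) →ₗ[ℂ] H ⊗[ℂ] H}, IsCM θ →
      cv (Finv ∘ₗ θ) (F ∘ₗ θ)
        = (Coalgebra.counit : H ⊗[ℂ] (H ⊗[ℂ] H) →ₗ[ℂ] ℂ) := by
    intro θ hθ
    rw [← cv_comp hθ, hF'Fc, hθ.counit_comp]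
  have hFtau : cv (F ∘ₗ tauX) (Finv ∘ₗ tauX)
      = (Coalgebra.counit : H ⊗[ℂ] H →ₗ[ℂ] ℂ) := by
    rw [← cv_comp isCM_tau, hFF, isCM_tau.counit_comp]
  have hF'tau : cv (Finv ∘ₗ tauX) (F ∘ₗ tauX)
      = (Coalgebra.counit : H ⊗[ℂ] H →ₗ[ℂ] ℂ) := by
    rw [← cv_comp isCM_tau, hF'Fc, isCM_tau.counit_comp]
  have hXt : Rmat F Finv ∘ₗ tauX = cv F (Finv ∘ₗ tauX) := by
    rw [hRmat, cv_comp isCM_tau, comp_assoc, r15, comp_id]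
  -- the cocycle condition
  have hcc : cv (cv (cv (F ∘ₗ p23x) (F ∘ₗ m23x)) (Finv ∘ₗ mu12x)) (Finv ∘ₗ p12x)
      = (Coalgebra.counit : H ⊗[ℂ] (H ⊗[ℂ] H) →ₗ[ℂ] ℂ) := by
    have h0 : cv (cv (cv (F ∘ₗ p23x) (F ∘ₗ m23x)) (Finv ∘ₗ mu12x))
        (Finv ∘ₗ (TensorProduct.rid ℂ (H ⊗[ℂ] H)).toLinearMap ∘ₗ
          TensorProduct.map LinearMap.id Coalgebra.counit ∘ₗ
          (TensorProduct.assoc ℂ H H H).symm.toLinearMap)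
        = (Coalgebra.counit : H ⊗[ℂ] (H ⊗[ℂ] H) →ₗ[ℂ] ℂ) := hcocycle.trans counit3_eq
    rwa [req0] at h0
  have C1 : cv (F ∘ₗ p23x) (F ∘ₗ m23x) = cv (F ∘ₗ p12x) (F ∘ₗ mu12x) := by
    have e1 := cv_solve_right hcc (invR isCM_p12)
    rw [cv_counit_left] at e1
    exact cv_solve_right e1 (invR isCM_mu12)
  have relabel : ∀ {σ : H ⊗[ℂ] (H ⊗[ℂ] H) →ₗ[ℂ] H ⊗[ℂ] (H ⊗[ℂ] H)}, IsCM σ →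
      cv (F ∘ₗ (p23x ∘ₗ σ)) (F ∘ₗ (m23x ∘ₗ σ))
        = cv (F ∘ₗ (p12x ∘ₗ σ)) (F ∘ₗ (mu12x ∘ₗ σ)) := by
    intro σ hσ
    have h := congrArg (fun z => z ∘ₗ σ) C1
    rw [cv_comp hσ, cv_comp hσ] at h
    simpa only [comp_assoc] using h
  have C2' := relabel isCM_cyc
  rw [r8, r9, r10, r11] at C2'
  have C3' := relabel isCM_s2
  rw [r1, r2, r3, r4] at C3'
  have C4' := relabel isCM_s4
  rw [r12, r13, r14] at C4'
  have C5' := relabel isCM_s5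
  rw [r5, r6, r7] at C5'
  have key3 := key_abstract C2'.symm C4' C1 (invR isCM_p13) (invR isCM_p12)
    (invL isCM_m23) (invL isCM_p23)
  have key2 := key_abstract C3' C5'.symm C1.symm (invR isCM_p13) (invR isCM_p23)
    (invL isCM_mu12) (invL isCM_p12)
  -- part 3 : bicharacter in the second argument
  have part3 : Rmat F Finv ∘ₗ TensorProduct.map LinearMap.id (twistedMul F Finv)
      = cv (Rmat F Finv ∘ₗ p13x) (Rmat F Finv ∘ₗ p12x) := by
    rw [fr1 F Finv, M3, M4]
    show cv (F ∘ₗ p23x) (cv (Rmat F Finv ∘ₗ m23x) (Finv ∘ₗ p23x)) = _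
    rw [hRmat, cv_comp isCM_m23, cv_comp isCM_p13, cv_comp isCM_p12]
    simp only [comp_assoc]
    exact key3
  -- part 2 : bicharacter in the first argument
  have part2 : Rmat F Finv ∘ₗ TensorProduct.map (twistedMul F Finv) LinearMap.id ∘ₗ
      (TensorProduct.assoc ℂ H H H).symm.toLinearMap
      = cv (cv (F ∘ₗ (tauX ∘ₗ p13x)) (Finv ∘ₗ p13x))
          (cv (F ∘ₗ (tauX ∘ₗ p23x)) (Finv ∘ₗ p23x)) := by
    rw [r17 (twistedMul F Finv), ← comp_assoc, ← comp_assoc, fr1 F Finv, M3, M4]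
    show cv (F ∘ₗ p23x) (cv ((Rmat F Finv ∘ₗ tauX) ∘ₗ m23x) (Finv ∘ₗ p23x)) ∘ₗ s2x = _
    rw [cv_comp isCM_s2, cv_comp isCM_s2]
    simp only [comp_assoc]
    rw [r1, r2, r15', hRmat, cv_comp isCM_mu12]
    simp only [comp_assoc]
    exact key2
  -- part 1 : coquasitriangularity
  have htwtau : twistedMul F Finv ∘ₗ (TensorProduct.comm ℂ H H).toLinearMap
      = cv (Algebra.linearMap ℂ H ∘ₗ (F ∘ₗ tauX))
          (cv (mul' ℂ H) (Algebra.linearMap ℂ H ∘ₗ (Finv ∘ₗ tauX))) := by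
    show twistedMul F Finv ∘ₗ tauX = _
    rw [fr1 F Finv, cv_comp isCM_tau, cv_comp isCM_tau, rmul]
    simp only [comp_assoc]
  have hiR : Algebra.linearMap ℂ H ∘ₗ Rmat F Finv
      = cv (Algebra.linearMap ℂ H ∘ₗ (F ∘ₗ tauX)) (Algebra.linearMap ℂ H ∘ₗ Finv) := by
    rw [hRmat, cv_iota]
  have part1 : (TensorProduct.rid ℂ H).toLinearMap ∘ₗ
        TensorProduct.map (twistedMul F Finv ∘ₗ (TensorProduct.comm ℂ H H).toLinearMap)
          (Rmat F Finv) ∘ₗ comul2 H =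
      (TensorProduct.lid ℂ H).toLinearMap ∘ₗ
        TensorProduct.map (Rmat F Finv) (twistedMul F Finv) ∘ₗ comul2 H := by
    rw [comul2_eq, ← fr3, ← fr4, htwtau, hiR, fr1 F Finv]
    set P := Algebra.linearMap ℂ H ∘ₗ (F ∘ₗ tauX) with hP
    set P' := Algebra.linearMap ℂ H ∘ₗ (Finv ∘ₗ tauX) with hP'
    set Q := Algebra.linearMap ℂ H ∘ₗ F with hQ
    set Q' := Algebra.linearMap ℂ H ∘ₗ Finv with hQ'
    have hP'P : cv P' P = cu := by
      rw [hP, hP', cv_iota, hF'tau]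
      rfl
    have hQ'Q : cv Q' Q = cu := by
      rw [hQ, hQ', cv_iota, hF'Fc]
      rfl
    calc cv (cv P (cv (mul' ℂ H) P')) (cv P Q')
        = cv P (cv (cv (mul' ℂ H) P') (cv P Q')) := by
          rw [cv_assoc P (cv (mul' ℂ H) P') (cv P Q')]
      _ = cv P (cv (mul' ℂ H) (cv P' (cv P Q'))) := by
          rw [cv_assoc (mul' ℂ H) P' (cv P Q')]
      _ = cv P (cv (mul' ℂ H) Q') := by rw [cv_cancel_cu hP'P]
      _ = cv P (cv Q' (cv Q (cv (mul' ℂ H) Q'))) := by rw [cv_cancel_cu hQ'Q]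
      _ = cv (cv P Q') (cv Q (cv (mul' ℂ H) Q')) := by
          rw [cv_assoc P Q' (cv Q (cv (mul' ℂ H) Q'))]
  refine ⟨part1, ?_, ?_, ?_, ?_⟩
  · -- part 2 in the stated form
    show Rmat F Finv ∘ₗ TensorProduct.map (twistedMul F Finv) LinearMap.id ∘ₗ
        (TensorProduct.assoc ℂ H H H).symm.toLinearMap
        = cv (Rmat F Finv ∘ₗ p13x)
            (mul' ℂ ℂ ∘ₗ TensorProduct.map Coalgebra.counit (Rmat F Finv))
    conv_rhs => rw [r18 (Rmat F Finv), hRmat, cv_comp isCM_p13, cv_comp isCM_p23]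
    simp only [comp_assoc]
    exact part2
  · exact part3
  · rw [counit2_eq]
    show cv (Rmat F Finv) (Rmat F Finv ∘ₗ tauX)
        = (Coalgebra.counit : H ⊗[ℂ] H →ₗ[ℂ] ℂ)
    rw [hXt, hRmat, cv_assoc, cv_cancel hF'Fc, hFtau]
  · rw [counit2_eq]
    show cv (Rmat F Finv ∘ₗ tauX) (Rmat F Finv)
        = (Coalgebra.counit : H ⊗[ℂ] H →ₗ[ℂ] ℂ)
    rw [hXt, hRmat, cv_assoc, cv_cancel hF'tau, hFF]
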